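/- For any matrix C ∈ SO₀(2,1), one has (c₂₂ + c₃₃)² + (c₃₂ − c₂₃)² = (1 + c₁₁)². -/
import Mathlib

open Matrix
noncomputable def Imat : Matrix (Fin 3) (Fin 3) ℝ := diagonal ![-1, 1, 1]
noncomputable def amat : Matrix (Fin 3) (Fin 3) ℝ := !![0,1,0; 1,0,0; 0,0,0]
noncomputable def bmat : Matrix (Fin 3) (Fin 3) ℝ := !![0,0,1; 0,0,0; 1,0,0]
noncomputable def cmat : Matrix (Fin 3) (Fin 3) ℝ := !![0,0,0; 0,0,-1; 0,1,0]
noncomputable def rot2 (η : ℝ) : Matrix (Fin 2) (Fin 2) ℝ :=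
  !![Real.cos η, -Real.sin η; Real.sin η, Real.cos η]
noncomputable def Kmat (η : ℝ) : Matrix (Fin 3) (Fin 3) ℝ :=
  !![1,0,0; 0,Real.cos η,-Real.sin η; 0,Real.sin η,Real.cos η]
def inSO21 (C : Matrix (Fin 3) (Fin 3) ℝ) : Prop :=
  C⁻¹ = Imat * Cᵀ * Imat ∧ C.det = 1 ∧ 1 ≤ C 0 0
theorem stmt11 (C : Matrix (Fin 3) (Fin 3) ℝ) (hC : inSO21 C) :
    (C 1 1 + C 2 2) ^ 2 + (C 2 1 - C 1 2) ^ 2 = (1 + C 0 0) ^ 2 := by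
  obtain ⟨hinv, hdet, _⟩ := hC
  have hu : IsUnit C.det := by rw [hdet]; exact isUnit_one
  have hadj : C.adjugate = Imat * Cᵀ * Imat := by
    rw [← hinv, Matrix.inv_def, hdet]; simp
  have h1 := congrFun (congrFun hadj 0) 0
  have hCM : (Imat * Cᵀ * Imat) * C = 1 := by rw [← hinv]; exact nonsing_inv_mul C hu
  have hMC : C * (Imat * Cᵀ * Imat) = 1 := by rw [← hinv]; exact mul_nonsing_inv C hu
  have e1 := congrFun (congrFun hCM 1) 1
  have e2 := congrFun (congrFun hCM 2) 2
  have e3 := congrFun (congrFun hMC 0) 0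
  simp [Matrix.adjugate_fin_three, Imat, Matrix.mul_apply, Fin.sum_univ_succ,
    Matrix.diagonal, Matrix.one_apply, Matrix.transpose_apply] at h1 e1 e2 e3
  nlinarith [h1, e1, e2, e3]
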